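/- Let M and N be modules over a commutative ring A, and suppose N is generated by a family {n_i}_{i∈I}. Then every element of M ⊗_A N can be written as a finite sum Σ_i m_i ⊗ n_i, and such a sum Σ_i m_i ⊗ n_i equals 0 in M ⊗_A N if and only if there exist finitely many elements m'_j ∈ M and a_{ij} ∈ A such that for every i, Σ_j a_{ij} m'_j = m_i, and for every j, Σ_i a_{ij} n_i = 0. -/

import Mathlib

open TensorProduct

section Aux

variable {A : Type*} [CommRing A] {M N : Type*} [AddCommGroup M] [Module A M]
    [AddCommGroup N] [Module A N] {I : Type*} [DecidableEq I] (n : I → N)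

/-- The map `(I →₀ M) → M ⊗ N`, `m ↦ ∑ mᵢ ⊗ nᵢ`. -/
noncomputable def auxPsi : (I →₀ M) →ₗ[A] M ⊗[A] N :=
  Finsupp.lsum A fun i => (TensorProduct.mk A M N).flip (n i)

omit [DecidableEq I] in
lemma auxPsi_apply (m : I →₀ M) :
    auxPsi n m = m.sum fun i mi => mi ⊗ₜ[A] n i := by simp [auxPsi, Finsupp.lsum_apply]; rfl

lemma auxPsi_eq :
    auxPsi (A := A) (M := M) n =
      (LinearMap.lTensor M (Finsupp.linearCombination A n)).comp
        ((finsuppScalarRight A A M I).symm : (I →₀ M) →ₗ[A] M ⊗[A] (I →₀ A)) := by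
  apply Finsupp.lhom_ext
  intro i m
  simp [auxPsi]

lemma auxExact {A : Type*} [CommRing A] {M N P : Type*} [AddCommGroup M] [Module A M]
    [AddCommGroup N] [Module A N] [AddCommGroup P] [Module A P] (G : P →ₗ[A] N)
    (hGsurj : Function.Surjective G) :
    Function.Exact (LinearMap.lTensor M (LinearMap.ker G).subtype) (LinearMap.lTensor M G) :=
  lTensor_exact M (LinearMap.exact_subtype_ker_map G) hGsurj

end Aux

set_option maxHeartbeats 1000000 in
/-- elements of `M ⊗[A] N` are finite sums `∑ mᵢ ⊗ nᵢ` over a generating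
family `n : I → N`, and such a sum vanishes iff there are finitely many `m'ⱼ ∈ M` and
`aᵢⱼ ∈ A` with `∑ⱼ aᵢⱼ m'ⱼ = mᵢ` for all `i` and `∑ᵢ aᵢⱼ nᵢ = 0` for all `j`. -/
theorem stmt0 {A : Type*} [CommRing A] {M N : Type*} [AddCommGroup M] [Module A M]
    [AddCommGroup N] [Module A N] {I : Type*} (n : I → N)
    (hn : Submodule.span A (Set.range n) = ⊤) :
    (∀ t : M ⊗[A] N, ∃ m : I →₀ M, t = m.sum fun i mi => mi ⊗ₜ[A] n i) ∧
    (∀ m : I →₀ M,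
      (m.sum fun i mi => mi ⊗ₜ[A] n i) = 0 ↔
        ∃ (k : ℕ) (m' : Fin k → M) (a : I →₀ (Fin k → A)),
          (∀ i : I, ∑ j, a i j • m' j = m i) ∧
          (∀ j : Fin k, (a.sum fun i ai => ai j • n i) = 0)) := by
  classical
  obtain ⟨G, hG⟩ : ∃ G : (I →₀ A) →ₗ[A] N, G = Finsupp.linearCombination A n := ⟨_, rfl⟩
  have hGsurj : Function.Surjective G := by
    rw [← LinearMap.range_eq_top, hG, Finsupp.range_linearCombination, hn]
  constructor
  · -- surjectivity
    intro t
    have hsurj : Function.Surjective (auxPsi (A := A) (M := M) n) := by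
      rw [auxPsi_eq, LinearMap.coe_comp]
      refine Function.Surjective.comp ?_ (finsuppScalarRight A A M I).symm.surjective
      rw [← hG]
      exact LinearMap.lTensor_surjective M hGsurj
    obtain ⟨m, hm⟩ := hsurj t
    exact ⟨m, by rw [← hm, auxPsi_apply]⟩
  · intro m
    constructor
    · -- forward direction
      intro hsum
      set e : M ⊗[A] (I →₀ A) := (finsuppScalarRight A A M I).symm m with he
      have hker : LinearMap.lTensor M G e = 0 := by
        have h0 : auxPsi (A := A) n m = 0 := by rw [auxPsi_apply, hsum]
        rw [auxPsi_eq] at h0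
        rw [he, hG]
        exact h0
      have hexact : Function.Exact (LinearMap.lTensor M (LinearMap.ker G).subtype)
          (LinearMap.lTensor M G) :=
        auxExact G hGsurj
      have hmem : e ∈ Set.range (LinearMap.lTensor M (LinearMap.ker G).subtype) :=
        (hexact e).mp hker
      obtain ⟨u, hu⟩ := hmem
      obtain ⟨ma, rfl⟩ := TensorProduct.exists_finset u
      set k := ma.card with hk
      set c : Fin k → (I →₀ A) := fun j => ((ma.equivFin.symm j : M × LinearMap.ker G).2 : I →₀ A)
        with hc
      set m' : Fin k → M := fun j => (ma.equivFin.symm j : M × LinearMap.ker G).1 with hm'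
      have he' : e = ∑ j : Fin k, m' j ⊗ₜ[A] (c j) := by
        rw [← hu, map_sum]
        rw [← Finset.sum_attach ma (fun x => LinearMap.lTensor M (LinearMap.ker G).subtype
          (x.1 ⊗ₜ[A] x.2))]
        rw [← Finset.univ_eq_attach, ← Equiv.sum_comp ma.equivFin.symm]
        simp [m', c]
        rfl
      -- define a
      set s : Finset I := Finset.univ.biUnion fun j : Fin k => (c j).support with hs
      set a : I →₀ (Fin k → A) := Finsupp.onFinset s (fun i => fun j => c j i)
        (by
          intro i hi
          rw [Function.ne_iff] at hi
          obtain ⟨j, hj⟩ := hi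
          exact Finset.mem_biUnion.mpr ⟨j, Finset.mem_univ j, Finsupp.mem_support_iff.mpr hj⟩)
        with ha
      refine ⟨k, m', a, ?_, ?_⟩
      · intro i
        have h1 : finsuppScalarRight A A M I e i = m i := by rw [he]; simp
        rw [he'] at h1
        rw [map_sum] at h1
        rw [Finset.sum_apply'] at h1
        simp only [finsuppScalarRight_apply_tmul_apply] at h1
        rw [← h1]
        rfl
      · intro j
        have hcj : c j ∈ LinearMap.ker G := (ma.equivFin.symm j : M × LinearMap.ker G).2.2
        have hGcj : G (c j) = 0 := hcj
        rw [hG, Finsupp.linearCombination_apply] at hGcj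
        rw [Finsupp.sum] at hGcj ⊢
        have hsub : (c j).support ⊆ a.support := by
          intro i hi
          rw [Finsupp.mem_support_iff] at hi ⊢
          intro h0
          apply hi
          have : a i j = c j i := rfl
          rw [← this, h0]
          rfl
        rw [← hGcj]
        symm
        apply Finset.sum_subset hsub
        intro i _ hi
        rw [Finsupp.notMem_support_iff] at hi
        have : a i j = c j i := rfl
        rw [hi, zero_smul]
    · -- backward direction
      rintro ⟨k, m', a, h1, h2⟩
      set s : Finset I := m.support ∪ a.support with hs
      have hsum1 : (m.sum fun i mi => mi ⊗ₜ[A] n i) = ∑ i ∈ s, m i ⊗ₜ[A] n i := by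
        rw [Finsupp.sum]
        exact Finset.sum_subset Finset.subset_union_left (fun i _ hi => by
          rw [Finsupp.notMem_support_iff.mp hi, TensorProduct.zero_tmul])
      rw [hsum1]
      have : ∀ i ∈ s, m i ⊗ₜ[A] n i = ∑ j : Fin k, m' j ⊗ₜ[A] (a i j • n i) := by
        intro i _
        rw [← h1 i, TensorProduct.sum_tmul]
        congr 1
        ext j
        rw [TensorProduct.smul_tmul]
      rw [Finset.sum_congr rfl this, Finset.sum_comm]
      apply Finset.sum_eq_zero
      intro j _
      rw [← TensorProduct.tmul_sum]
      have hz : ∑ i ∈ s, a i j • n i = 0 := by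
        have := h2 j
        rw [Finsupp.sum] at this
        rw [← this]
        symm
        apply Finset.sum_subset Finset.subset_union_right
        intro i _ hi
        rw [Finsupp.notMem_support_iff] at hi
        rw [hi]
        simp
      rw [hz, TensorProduct.tmul_zero]
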